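/- Let U ∈ ℝ^{d×d} be symmetric positive definite and t ∈ ℝ^d, and let S = S(U,t,1) = [[U + t tᵀ, t], [tᵀ, 1]]. Then for every x ∈ ℝ^d, q_N((x, 1); S) = p_N(x; t, U); that is, when the bottom-right block equals 1, the reformulated density q_N evaluated at the lifted point coincides exactly with the d-dimensional Gaussian density with mean t and covariance U. -/

import Mathlib

open Matrix Real

noncomputable def pN {d : ℕ} (x μ : Fin d → ℝ) (C : Matrix (Fin d) (Fin d) ℝ) : ℝ :=
  C.det ^ (-(1:ℝ)/2) * (2 * Real.pi) ^ (-(d:ℝ)/2) *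
    Real.exp (-(1/2) * ((x - μ) ⬝ᵥ (C⁻¹ *ᵥ (x - μ))))

noncomputable def qN {d : ℕ} (y : Fin (d+1) → ℝ) (S : Matrix (Fin (d+1)) (Fin (d+1)) ℝ) : ℝ :=
  (2 * Real.pi * Real.exp 1) ^ ((1:ℝ)/2) * S.det ^ (-(1:ℝ)/2) *
    (2 * Real.pi) ^ (-((d:ℝ)+1)/2) * Real.exp (-(1/2) * (y ⬝ᵥ (S⁻¹ *ᵥ y)))

def liftPt {d : ℕ} (x : Fin d → ℝ) : Fin (d+1) → ℝ := Fin.snoc x 1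

noncomputable def Lgauss {d n : ℕ} (x : Fin n → Fin d → ℝ) (μ : Fin d → ℝ)
    (C : Matrix (Fin d) (Fin d) ℝ) : ℝ := ∑ i, Real.log (pN (x i) μ C)

noncomputable def Lhat {d n : ℕ} (x : Fin n → Fin d → ℝ)
    (S : Matrix (Fin (d+1)) (Fin (d+1)) ℝ) : ℝ := ∑ i, Real.log (qN (liftPt (x i)) S)

def Sblk {d : ℕ} (U : Matrix (Fin d) (Fin d) ℝ) (t : Fin d → ℝ) (s : ℝ) :
    Matrix (Fin (d+1)) (Fin (d+1)) ℝ :=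
  Matrix.of (Fin.snoc
    (fun i : Fin d => Fin.snoc (fun j : Fin d => U i j + s * t i * t j) (s * t i))
    (Fin.snoc (fun j : Fin d => s * t j) s))

/- ---------- auxiliary material ---------- -/

noncomputable def Nmat {d : ℕ} (U : Matrix (Fin d) (Fin d) ℝ) (t : Fin d → ℝ) :
    Matrix (Fin d ⊕ Fin 1) (Fin d ⊕ Fin 1) ℝ :=
  fromBlocks (U + vecMulVec t t) (Matrix.of fun i _ => t i) (Matrix.of fun _ j => t j)
    (Matrix.of fun _ _ => (1:ℝ))

noncomputable def NmatInv {d : ℕ} (U : Matrix (Fin d) (Fin d) ℝ) (t : Fin d → ℝ) :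
    Matrix (Fin d ⊕ Fin 1) (Fin d ⊕ Fin 1) ℝ :=
  fromBlocks U⁻¹ (Matrix.of fun i _ => -((U⁻¹ *ᵥ t) i)) (Matrix.of fun _ j => -((U⁻¹ *ᵥ t) j))
    (Matrix.of fun _ _ => 1 + t ⬝ᵥ (U⁻¹ *ᵥ t))

lemma Sblk_eq {d : ℕ} (U : Matrix (Fin d) (Fin d) ℝ) (t : Fin d → ℝ) :
    Sblk U t 1 = Matrix.reindex finSumFinEquiv finSumFinEquiv (Nmat U t) := by
  ext i j
  refine Fin.lastCases ?_ (fun i => ?_) i <;> refine Fin.lastCases ?_ (fun j => ?_) j <;>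
    simp [Sblk, Nmat, Fin.snoc_castSucc, vecMulVec_apply,
      show ∀ k : Fin d, finSumFinEquiv.symm (Fin.castSucc k) = Sum.inl k from
        fun k => finSumFinEquiv_symm_apply_castAdd k]

lemma liftPt_comp {d : ℕ} (x : Fin d → ℝ) :
    liftPt x ∘ finSumFinEquiv = Sum.elim x (fun _ : Fin 1 => (1:ℝ)) := by
  ext k
  cases k with
  | inl i => simp [liftPt, show Fin.castAdd 1 i = Fin.castSucc i from rfl]
  | inr i =>
    have : Fin.natAdd d i = Fin.last d := by ext; simp [Fin.val_eq_zero]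
    simp [liftPt, this]

lemma det_Sblk {d : ℕ} (U : Matrix (Fin d) (Fin d) ℝ) (t : Fin d → ℝ) :
    (Sblk U t 1).det = U.det := by
  rw [Sblk_eq, Matrix.det_reindex_self, Nmat,
    show (Matrix.of fun _ _ => (1:ℝ)) = (1 : Matrix (Fin 1) (Fin 1) ℝ) by
      ext i j; fin_cases i; fin_cases j; simp,
    Matrix.det_fromBlocks_one₂₂]
  congr 1
  ext i j
  simp [mul_apply, vecMulVec_apply]

lemma vecMul_inv_symm {d : ℕ} (U : Matrix (Fin d) (Fin d) ℝ) (hU : U.PosDef)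
    (t : Fin d → ℝ) : t ᵥ* U⁻¹ = U⁻¹ *ᵥ t := by
  have hT : U⁻¹ᵀ = U⁻¹ := by
    have h := hU.1.inv
    simpa [Matrix.IsHermitian, Matrix.conjTranspose_eq_transpose_of_trivial] using h
  calc t ᵥ* U⁻¹ = t ᵥ* U⁻¹ᵀ := by rw [hT]
    _ = U⁻¹ *ᵥ t := Matrix.vecMul_transpose _ _

lemma Nmat_mul_inv {d : ℕ} (U : Matrix (Fin d) (Fin d) ℝ) (hU : U.PosDef) (t : Fin d → ℝ) :
    Nmat U t * NmatInv U t = 1 := by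
  have hdet : IsUnit U.det := hU.det_pos.ne'.isUnit
  have hUU : U * U⁻¹ = 1 := Matrix.mul_nonsing_inv U hdet
  set u := U⁻¹ *ᵥ t with hu
  have hvm : t ᵥ* U⁻¹ = u := vecMul_inv_symm U hU t
  have hmv : U *ᵥ u = t := by
    rw [hu, Matrix.mulVec_mulVec, hUU, Matrix.one_mulVec]
  have hU2 : ∀ i, ∑ k, U i k * u k = t i := fun i => congrFun hmv i
  have hu2 : ∀ j, ∑ k, t k * U⁻¹ k j = u j := fun j => congrFun hvm j
  have hTL : (U + vecMulVec t t) * U⁻¹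
      + (Matrix.of fun i (_ : Fin 1) => t i) * (Matrix.of fun (_ : Fin 1) j => -(u j))
      = (1 : Matrix (Fin d) (Fin d) ℝ) := by
    ext i j
    have h1 : ∀ k, (U i k + vecMulVec t t i k) * U⁻¹ k j
        = U i k * U⁻¹ k j + t i * (t k * U⁻¹ k j) := fun k => by
      simp [vecMulVec_apply]; ring
    simp only [Matrix.add_apply, mul_apply, Matrix.of_apply, Fin.sum_univ_one]
    rw [Finset.sum_congr rfl fun k _ => h1 k, Finset.sum_add_distrib, ← Finset.mul_sum, hu2]
    have h2 : ∑ k, U i k * U⁻¹ k j = (1 : Matrix (Fin d) (Fin d) ℝ) i j :=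
      congrFun (congrFun hUU i) j
    rw [h2]; ring
  have hTR : (U + vecMulVec t t) * (Matrix.of fun i (_ : Fin 1) => -(u i))
      + (Matrix.of fun i (_ : Fin 1) => t i) * (Matrix.of fun (_ : Fin 1) (_ : Fin 1) => 1 + t ⬝ᵥ u)
      = (0 : Matrix (Fin d) (Fin 1) ℝ) := by
    ext i j
    have h1 : ∀ k, (U i k + vecMulVec t t i k) * (-(u k))
        = -(U i k * u k) + t i * -(t k * u k) := fun k => by
      simp [vecMulVec_apply]; ring
    simp only [Matrix.add_apply, mul_apply, Matrix.of_apply, Matrix.zero_apply,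
      Fin.sum_univ_one]
    rw [Finset.sum_congr rfl fun k _ => h1 k, Finset.sum_add_distrib]
    have h2 : ∑ k, -(U i k * u k) = -(t i) := by
      rw [Finset.sum_neg_distrib, hU2 i]
    have h3 : ∑ k, t i * -(t k * u k) = t i * -(∑ k, t k * u k) := by
      rw [← Finset.mul_sum, Finset.sum_neg_distrib]
    rw [h2, h3]
    simp only [dotProduct]
    ring
  have hBL : (Matrix.of fun (_ : Fin 1) j => t j) * U⁻¹
      + (Matrix.of fun (_ : Fin 1) (_ : Fin 1) => (1:ℝ)) * (Matrix.of fun (_ : Fin 1) j => -(u j))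
      = (0 : Matrix (Fin 1) (Fin d) ℝ) := by
    ext i j
    simp only [Matrix.add_apply, mul_apply, Matrix.of_apply, Matrix.zero_apply,
      Fin.sum_univ_one]
    rw [show ∑ k, t k * U⁻¹ k j = u j from hu2 j]
    ring
  have hBR : (Matrix.of fun (_ : Fin 1) j => t j) * (Matrix.of fun i (_ : Fin 1) => -(u i))
      + (Matrix.of fun (_ : Fin 1) (_ : Fin 1) => (1:ℝ))
          * (Matrix.of fun (_ : Fin 1) (_ : Fin 1) => 1 + t ⬝ᵥ u)
      = (1 : Matrix (Fin 1) (Fin 1) ℝ) := by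
    ext i j
    simp only [Matrix.add_apply, mul_apply, Matrix.of_apply, Fin.sum_univ_one]
    have h1 : (1 : Matrix (Fin 1) (Fin 1) ℝ) i j = 1 := by fin_cases i; fin_cases j; simp
    rw [h1]
    have h2 : ∑ k, t k * -(u k) = -(∑ k, t k * u k) := by
      rw [← Finset.sum_neg_distrib]; exact Finset.sum_congr rfl fun k _ => by ring
    rw [h2]
    simp only [dotProduct]
    ring
  rw [Nmat, NmatInv, fromBlocks_multiply, hTL, hTR, hBL, hBR, fromBlocks_one]

lemma inv_Sblk {d : ℕ} (U : Matrix (Fin d) (Fin d) ℝ) (hU : U.PosDef) (t : Fin d → ℝ) :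
    (Sblk U t 1)⁻¹ = Matrix.reindex finSumFinEquiv finSumFinEquiv (NmatInv U t) := by
  rw [Sblk_eq, Matrix.inv_reindex]
  congr 1
  exact Matrix.inv_eq_right_inv (Nmat_mul_inv U hU t)

lemma quad_Sblk {d : ℕ} (U : Matrix (Fin d) (Fin d) ℝ) (hU : U.PosDef) (t x : Fin d → ℝ) :
    liftPt x ⬝ᵥ ((Sblk U t 1)⁻¹ *ᵥ liftPt x)
      = (x - t) ⬝ᵥ (U⁻¹ *ᵥ (x - t)) + 1 := by
  set u := U⁻¹ *ᵥ t with hu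
  rw [inv_Sblk U hU t, Matrix.reindex_apply, Matrix.submatrix_mulVec_equiv,
    dotProduct_comp_equiv_symm]
  simp only [Equiv.symm_symm, liftPt_comp]
  rw [NmatInv, fromBlocks_mulVec, sumElim_dotProduct_sumElim]
  have htop : U⁻¹ *ᵥ (Sum.elim x (fun _ : Fin 1 => (1:ℝ)) ∘ Sum.inl)
      + (Matrix.of fun i (_ : Fin 1) => -(u i)) *ᵥ (Sum.elim x (fun _ : Fin 1 => (1:ℝ)) ∘ Sum.inr)
      = U⁻¹ *ᵥ x - u := by
    ext i; simp [mulVec, dotProduct, sub_eq_add_neg]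
  have hbot : (Matrix.of fun (_ : Fin 1) j => -(u j)) *ᵥ (Sum.elim x (fun _ : Fin 1 => (1:ℝ)) ∘ Sum.inl)
      + (Matrix.of fun (_ : Fin 1) (_ : Fin 1) => 1 + t ⬝ᵥ u) *ᵥ (Sum.elim x (fun _ : Fin 1 => (1:ℝ)) ∘ Sum.inr)
      = fun _ => -(u ⬝ᵥ x) + (1 + t ⬝ᵥ u) := by
    ext i; simp [mulVec, dotProduct]
  rw [htop, hbot]
  have hux : t ⬝ᵥ (U⁻¹ *ᵥ x) = u ⬝ᵥ x := by
    rw [Matrix.dotProduct_mulVec, vecMul_inv_symm U hU t]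
  have h1 : (fun _ : Fin 1 => (1:ℝ)) ⬝ᵥ (fun _ => -(u ⬝ᵥ x) + (1 + t ⬝ᵥ u))
      = -(u ⬝ᵥ x) + (1 + t ⬝ᵥ u) := by simp [dotProduct]
  rw [h1, Matrix.mulVec_sub, sub_dotProduct, dotProduct_sub,
    dotProduct_sub, ← hu, hux]
  ring

/-- when the bottom-right block is 1, the reformulated density `q_N` at the
lifted point coincides with the d-dimensional Gaussian density with mean `t` and
covariance `U`. -/
theorem qN_at_s_eq_one {d : ℕ} (U : Matrix (Fin d) (Fin d) ℝ) (hU : U.PosDef)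
    (t : Fin d → ℝ) (x : Fin d → ℝ) :
    qN (liftPt x) (Sblk U t 1) = pN x t U := by
  rw [qN, pN, det_Sblk, quad_Sblk U hU t x]
  have h2pi : (0:ℝ) < 2 * Real.pi := by positivity
  have hsplit : (2 * Real.pi * Real.exp 1) ^ ((1:ℝ)/2)
      = (2 * Real.pi) ^ ((1:ℝ)/2) * Real.exp (1/2) := by
    rw [Real.mul_rpow h2pi.le (Real.exp_pos 1).le, Real.exp_one_rpow]
  have hpow : (2 * Real.pi) ^ ((1:ℝ)/2) * (2 * Real.pi) ^ (-((d:ℝ)+1)/2)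
      = (2 * Real.pi) ^ (-(d:ℝ)/2) := by
    rw [← Real.rpow_add h2pi]
    norm_num
    ring_nf
  have hexp : Real.exp (-(1/2) * ((x - t) ⬝ᵥ (U⁻¹ *ᵥ (x - t)) + 1))
      = Real.exp (-(1/2) * ((x - t) ⬝ᵥ (U⁻¹ *ᵥ (x - t)))) * Real.exp (-(1/2)) := by
    rw [← Real.exp_add]; ring_nf
  rw [hsplit, hexp]
  have hee : Real.exp (1/2) * Real.exp (-(1/2)) = 1 := by
    rw [← Real.exp_add]; norm_num
  calc (2 * Real.pi) ^ ((1:ℝ)/2) * Real.exp (1/2) * U.det ^ (-(1:ℝ)/2) *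
        (2 * Real.pi) ^ (-((d:ℝ)+1)/2) *
        (Real.exp (-(1/2) * ((x - t) ⬝ᵥ (U⁻¹ *ᵥ (x - t)))) * Real.exp (-(1/2)))
      = U.det ^ (-(1:ℝ)/2) * ((2 * Real.pi) ^ ((1:ℝ)/2) * (2 * Real.pi) ^ (-((d:ℝ)+1)/2)) *
        Real.exp (-(1/2) * ((x - t) ⬝ᵥ (U⁻¹ *ᵥ (x - t)))) *
        (Real.exp (1/2) * Real.exp (-(1/2))) := by ring
    _ = _ := by rw [hpow, hee, mul_one]
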